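/- Let A be a finite-dimensional unital associative F-algebra with a group homomorphism σ : G → A^× from a finite group G, let U and V be subgroups of G, let φ : V → U be a group isomorphism, let i be an idempotent of A^U and j an idempotent of A^V. Then the following are equivalent: (a) there exists a unit r ∈ A^× such that σ(φ(v)) i = r (σ(v) j) r⁻¹ for all v ∈ V; (b) there exist s ∈ i A^φ j and s' ∈ j A^{φ⁻¹} i such that s s' = i and s' s = j. -/

import Mathlib

open Module LinearMap

section CancellationMachinery

universe v

variable {F : Type*} [Field F] {R : Type*} [Ring R] [Algebra F R]

/-- Fitting-type dichotomy: an endomorphism of a finite-dimensional indecomposable module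
is bijective or nilpotent. -/
theorem fitting_or {M : Type*} [AddCommGroup M] [Module R M] [Module F M]
    [IsScalarTower F R M] [FiniteDimensional F M]
    (hInd : ∀ p q : Submodule R M, IsCompl p q → p = ⊥ ∨ q = ⊥)
    (f : M →ₗ[R] M) : Function.Bijective f ∨ IsNilpotent f := by
  haveI : IsNoetherian R M := isNoetherian_of_tower F inferInstance
  haveI : IsArtinian R M := isArtinian_of_tower F inferInstance
  -- kernels stabilize
  have kmono : ∀ {a b : ℕ}, a ≤ b → LinearMap.ker (f ^ a) ≤ LinearMap.ker (f ^ b) := by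
    intro a b hab
    obtain ⟨c, rfl⟩ := Nat.exists_eq_add_of_le hab
    intro x hx
    have hx' : (f ^ a) x = 0 := hx
    show (f ^ (a + c)) x = 0
    rw [add_comm, pow_add, Module.End.mul_apply, hx', map_zero]
  have rmono : ∀ {a b : ℕ}, a ≤ b → LinearMap.range (f ^ b) ≤ LinearMap.range (f ^ a) := by
    intro a b hab
    obtain ⟨c, rfl⟩ := Nat.exists_eq_add_of_le hab
    rintro x ⟨y, rfl⟩
    exact ⟨(f ^ c) y, by rw [pow_add, Module.End.mul_apply]⟩
  obtain ⟨n₁, hn₁⟩ := monotone_stabilizes_iff_noetherian.mpr ‹IsNoetherian R M›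
    ⟨fun n => LinearMap.ker (f ^ n), fun a b hab => kmono hab⟩
  obtain ⟨n₂, hn₂⟩ := IsArtinian.monotone_stabilizes
    (⟨fun n => OrderDual.toDual (LinearMap.range (f ^ n)),
      fun a b hab => rmono hab⟩ : ℕ →o (Submodule R M)ᵒᵈ)
  set N := n₁ + n₂ + 1 with hN
  have hN1 : 1 ≤ N := by omega
  have hker : ∀ m, N ≤ m → LinearMap.ker (f ^ m) = LinearMap.ker (f ^ N) := by
    intro m hm
    have h1 := hn₁ m (by omega)
    have h2 := hn₁ N (by omega)
    exact h1.symm.trans h2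
  have hrange : ∀ m, N ≤ m → LinearMap.range (f ^ m) = LinearMap.range (f ^ N) := by
    intro m hm
    have h1 := hn₂ m (by omega)
    have h2 := hn₂ N (by omega)
    exact (h1.symm.trans h2 : _)
  have hcompl : IsCompl (LinearMap.ker (f ^ N)) (LinearMap.range (f ^ N)) := by
    constructor
    · rw [disjoint_iff, Submodule.eq_bot_iff]
      rintro x ⟨hk, y, rfl⟩
      have : (f ^ (N + N)) y = 0 := by
        rw [pow_add, Module.End.mul_apply]; exact hk
      have hy : y ∈ LinearMap.ker (f ^ N) := by
        rw [← hker (N + N) (by omega)]; exact this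
      simpa using hy
    · rw [codisjoint_iff, eq_top_iff]
      intro x _
      have : (f ^ N) x ∈ LinearMap.range (f ^ (N + N)) := by
        rw [hrange (N + N) (by omega)]; exact ⟨x, rfl⟩
      obtain ⟨y, hy⟩ := this
      refine Submodule.mem_sup.mpr ⟨x - (f ^ N) y, ?_, (f ^ N) y, ⟨y, rfl⟩, by abel⟩
      show (f ^ N) (x - (f ^ N) y) = 0
      rw [map_sub, ← Module.End.mul_apply, ← pow_add, hy, sub_self]
  rcases hInd _ _ hcompl with hk | hr
  · left
    have hinj : Function.Injective f := by
      rw [← LinearMap.ker_eq_bot, eq_bot_iff]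
      calc LinearMap.ker f = LinearMap.ker (f ^ 1) := by rw [pow_one]
        _ ≤ LinearMap.ker (f ^ N) := kmono hN1
        _ ≤ ⊥ := by rw [hk]
    have hsurj : Function.Surjective f := by
      have := (LinearMap.injective_iff_surjective
        (f := (f.restrictScalars F : M →ₗ[F] M))).mp hinj
      exact this
    exact ⟨hinj, hsurj⟩
  · right
    exact ⟨N, LinearMap.range_eq_bot.mp hr⟩


/-- If the upper-left block of an isomorphism `M × P ≃ M × Q` is bijective, then `P ≃ Q`
(Schur complement). -/
theorem schur_cancel {M P Q : Type*} [AddCommGroup M] [AddCommGroup P] [AddCommGroup Q]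
    [Module R M] [Module R P] [Module R Q] (α : (M × P) ≃ₗ[R] (M × Q))
    (ha : Function.Bijective
      ((LinearMap.fst R M Q) ∘ₗ (α : (M × P) →ₗ[R] M × Q) ∘ₗ (LinearMap.inl R M P))) :
    Nonempty (P ≃ₗ[R] Q) := by
  set aL : M →ₗ[R] M :=
    (LinearMap.fst R M Q) ∘ₗ (α : (M × P) →ₗ[R] M × Q) ∘ₗ (LinearMap.inl R M P) with haL
  set bL : P →ₗ[R] M :=
    (LinearMap.fst R M Q) ∘ₗ (α : (M × P) →ₗ[R] M × Q) ∘ₗ (LinearMap.inr R M P) with hbL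
  set cL : M →ₗ[R] Q :=
    (LinearMap.snd R M Q) ∘ₗ (α : (M × P) →ₗ[R] M × Q) ∘ₗ (LinearMap.inl R M P) with hcL
  set dL : P →ₗ[R] Q :=
    (LinearMap.snd R M Q) ∘ₗ (α : (M × P) →ₗ[R] M × Q) ∘ₗ (LinearMap.inr R M P) with hdL
  have hα : ∀ (m : M) (p : P), α (m, p) = (aL m + bL p, cL m + dL p) := by
    intro m p
    have h : (m, p) = ((m, 0) : M × P) + ((0, p) : M × P) := by simp
    rw [h, map_add]
    rfl
  let aE := LinearEquiv.ofBijective aL ha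
  set q : P →ₗ[R] Q := dL - cL ∘ₗ (aE.symm : M ≃ₗ[R] M).toLinearMap ∘ₗ bL with hqdef
  have hq : ∀ p, q p = dL p - cL (aE.symm (bL p)) := fun p => rfl
  have haE : ∀ m, aL (aE.symm m) = m := fun m => aE.apply_symm_apply m
  have hinj : ∀ p, q p = 0 → p = 0 := by
    intro p hp
    have h1 : α (-(aE.symm (bL p)), p) = 0 := by
      rw [hα]
      have e1 : aL (-(aE.symm (bL p))) + bL p = 0 := by
        rw [map_neg, haE]; abel
      have e2 : cL (-(aE.symm (bL p))) + dL p = 0 := by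
        rw [hq] at hp
        rw [map_neg, neg_add_eq_sub]
        exact hp
      rw [e1, e2]; rfl
    have h2 : (-(aE.symm (bL p)), p) = (0 : M × P) := by
      apply α.injective
      rw [h1, map_zero]
    exact congrArg Prod.snd h2
  have hsurj : ∀ y : Q, ∃ p, q p = y := by
    intro y
    set x := α.symm (0, y) with hxdef
    have hx : α (x.1, x.2) = (0, y) := by
      rw [Prod.mk.eta]; exact α.apply_symm_apply _
    rw [hα] at hx
    have h1 : aL x.1 + bL x.2 = 0 := congrArg Prod.fst hx
    have h2 : cL x.1 + dL x.2 = y := congrArg Prod.snd hx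
    refine ⟨x.2, ?_⟩
    have hm : aE.symm (bL x.2) = -x.1 := by
      apply aE.injective
      rw [aE.apply_symm_apply]
      show bL x.2 = aL (-x.1)
      rw [map_neg, ← neg_eq_of_add_eq_zero_right h1]
    rw [hq, hm, map_neg, sub_neg_eq_add, add_comm]
    exact h2
  exact ⟨LinearEquiv.ofBijective q ⟨(injective_iff_map_eq_zero q).mpr hinj, hsurj⟩⟩


/-- Exchange lemma: cancellation of an indecomposable finite-dimensional module. -/
theorem exchange_cancel {M P Q : Type*} [AddCommGroup M] [AddCommGroup P] [AddCommGroup Q]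
    [Module R M] [Module R P] [Module R Q] [Module F M] [IsScalarTower F R M]
    [FiniteDimensional F M]
    (hInd : ∀ p q : Submodule R M, IsCompl p q → p = ⊥ ∨ q = ⊥)
    (α : (M × P) ≃ₗ[R] (M × Q)) : Nonempty (P ≃ₗ[R] Q) := by
  set aL : M →ₗ[R] M :=
    (LinearMap.fst R M Q) ∘ₗ (α : (M × P) →ₗ[R] M × Q) ∘ₗ (LinearMap.inl R M P) with haL
  set bL : P →ₗ[R] M :=
    (LinearMap.fst R M Q) ∘ₗ (α : (M × P) →ₗ[R] M × Q) ∘ₗ (LinearMap.inr R M P) with hbL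
  set a' : M →ₗ[R] M :=
    (LinearMap.fst R M P) ∘ₗ (α.symm : (M × Q) →ₗ[R] M × P) ∘ₗ (LinearMap.inl R M Q) with ha'
  set d' : M →ₗ[R] P :=
    (LinearMap.snd R M P) ∘ₗ (α.symm : (M × Q) →ₗ[R] M × P) ∘ₗ (LinearMap.inl R M Q) with hd'
  have key : ∀ m : M, aL (a' m) + bL (d' m) = m := by
    intro m
    have h1 : ((a' m, d' m) : M × P) = α.symm (m, 0) := by
      show ((α.symm (m, 0)).1, (α.symm (m, 0)).2) = α.symm (m, 0)
      exact Prod.mk.eta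
    have h2 : aL (a' m) + bL (d' m) = (α ((a' m, 0) : M × P) + α ((0, d' m) : M × P)).1 := rfl
    rw [h2, ← map_add]
    have h3 : ((a' m, 0) : M × P) + ((0, d' m) : M × P) = (a' m, d' m) := by simp
    rw [h3, h1, α.apply_symm_apply]
  rcases fitting_or (F := F) hInd (aL ∘ₗ a') with hbij | hnil
  · have hsurj : Function.Surjective aL := by
      intro y
      obtain ⟨x, hx⟩ := hbij.2 y
      exact ⟨a' x, hx⟩
    have hinj : Function.Injective aL := by
      have := (LinearMap.injective_iff_surjective
        (f := (aL.restrictScalars F : M →ₗ[F] M))).mpr hsurj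
      exact this
    exact schur_cancel α ⟨hinj, hsurj⟩
  · -- b ∘ d' is a unit
    have h1 : (1 : Module.End R M) - (aL ∘ₗ a') = bL ∘ₗ d' := by
      have : (aL ∘ₗ a') + (bL ∘ₗ d') = (1 : Module.End R M) := by
        apply LinearMap.ext
        intro m
        exact key m
      rw [← this, add_sub_cancel_left]
    have hu : IsUnit ((bL ∘ₗ d' : M →ₗ[R] M) : Module.End R M) := by
      rw [← h1]
      exact hnil.isUnit_one_sub
    have hbd : Function.Bijective (bL ∘ₗ d' : M →ₗ[R] M) :=
      (Module.End.isUnit_iff _).mp hu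
    set hE := LinearEquiv.ofBijective (bL ∘ₗ d' : M →ₗ[R] M) hbd with hhE
    set k : M →ₗ[R] P := d' ∘ₗ (hE.symm : M ≃ₗ[R] M).toLinearMap with hk
    have hbk : ∀ m, bL (k m) = m := fun m => hE.apply_symm_apply m
    set τ : (M × P) →ₗ[R] (M × P) :=
      LinearMap.prod (bL ∘ₗ LinearMap.snd R M P)
        (k ∘ₗ LinearMap.fst R M P + LinearMap.snd R M P - k ∘ₗ bL ∘ₗ LinearMap.snd R M P)
      with hτdef
    have hτ : ∀ (m : M) (p : P), τ (m, p) = (bL p, k m + p - k (bL p)) := fun m p => rfl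
    have hττ : τ ∘ₗ τ = LinearMap.id := by
      apply LinearMap.ext
      rintro ⟨m, p⟩
      show τ (τ (m, p)) = (m, p)
      rw [hτ, hτ]
      have e1 : bL (k m + p - k (bL p)) = m := by
        rw [map_sub, map_add, hbk, hbk]; abel
      rw [e1]
      congr 1
      module
    set τE : (M × P) ≃ₗ[R] (M × P) := LinearEquiv.ofLinear τ τ hττ hττ with hτE
    apply schur_cancel (τE.trans α)
    have hnew : ∀ m : M,
        ((LinearMap.fst R M Q) ∘ₗ ((τE.trans α) : (M × P) →ₗ[R] M × Q)
          ∘ₗ (LinearMap.inl R M P)) m = m := by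
      intro m
      show (α (τ (m, 0))).1 = m
      rw [hτ]
      have : (bL 0, k m + 0 - k (bL 0)) = ((0 : M), k m) := by simp
      rw [this]
      show bL (k m) = m
      exact hbk m
    constructor
    · intro x y hxy
      rw [hnew x, hnew y] at hxy; exact hxy
    · intro y; exact ⟨y, hnew y⟩

/-- Cancellation for finite-dimensional modules. -/
theorem cancel_of_equiv (F : Type*) [Field F] {R : Type*} [Ring R] [Algebra F R] :
    ∀ (n : ℕ) (M P Q : Type v) [AddCommGroup M] [AddCommGroup P] [AddCommGroup Q]
      [Module R M] [Module R P] [Module R Q] [Module F M] [IsScalarTower F R M]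
      [FiniteDimensional F M],
      finrank F M ≤ n → ((M × P) ≃ₗ[R] (M × Q)) → Nonempty (P ≃ₗ[R] Q) := by
  intro n
  induction n using Nat.strong_induction_on with
  | _ n IH =>
    intro M P Q _ _ _ _ _ _ _ _ _ hfr α
    by_cases hdec : ∃ p q : Submodule R M, IsCompl p q ∧ p ≠ ⊥ ∧ q ≠ ⊥
    · obtain ⟨p, q, hpq, hp, hq⟩ := hdec
      haveI hfdp : FiniteDimensional F ↥p :=
        inferInstanceAs (FiniteDimensional F ↥(p.restrictScalars F))
      haveI hfdq : FiniteDimensional F ↥q :=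
        inferInstanceAs (FiniteDimensional F ↥(q.restrictScalars F))
      -- restrict scalars preserves complements
      have hpq' : IsCompl (p.restrictScalars F) (q.restrictScalars F) := by
        constructor
        · rw [disjoint_iff, Submodule.eq_bot_iff]
          intro x hx
          rw [Submodule.mem_inf] at hx
          exact (Submodule.disjoint_def.mp hpq.disjoint) x hx.1 hx.2
        · rw [codisjoint_iff, eq_top_iff]
          intro x _
          have hx : x ∈ p ⊔ q := by
            rw [codisjoint_iff.mp hpq.codisjoint]; trivial
          obtain ⟨y, hy, z, hz, rfl⟩ := Submodule.mem_sup.mp hx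
          exact Submodule.mem_sup.mpr ⟨y, hy, z, hz, rfl⟩
      have hrank' : finrank F (p.restrictScalars F) + finrank F (q.restrictScalars F)
          = finrank F M := by
        have := Submodule.finrank_sup_add_finrank_inf_eq
          (p.restrictScalars F) (q.restrictScalars F)
        rw [codisjoint_iff.mp hpq'.codisjoint, disjoint_iff.mp hpq'.disjoint] at this
        simpa [finrank_top] using this.symm
      have hrp : finrank F ↥p = finrank F ↥(p.restrictScalars F) := rfl
      have hrq : finrank F ↥q = finrank F ↥(q.restrictScalars F) := rfl
      have hppos : 0 < finrank F ↥p := by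
        rw [hrp]
        haveI : Nontrivial ↥(p.restrictScalars F) := by
          rw [Submodule.nontrivial_iff_ne_bot]
          intro hbot
          apply hp
          rw [Submodule.eq_bot_iff] at hbot ⊢
          exact fun x hx => hbot x hx
        exact finrank_pos
      have hqpos : 0 < finrank F ↥q := by
        rw [hrq]
        haveI : Nontrivial ↥(q.restrictScalars F) := by
          rw [Submodule.nontrivial_iff_ne_bot]
          intro hbot
          apply hq
          rw [Submodule.eq_bot_iff] at hbot ⊢
          exact fun x hx => hbot x hx
        exact finrank_pos
      have hsum : finrank F ↥p + finrank F ↥q = finrank F M := by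
        rw [hrp, hrq]; exact hrank'
      set e := Submodule.prodEquivOfIsCompl p q hpq with he
      let β : (↥p × (↥q × P)) ≃ₗ[R] (↥p × (↥q × Q)) :=
        (LinearEquiv.prodAssoc R ↥p ↥q P).symm.trans
          ((e.prodCongr (LinearEquiv.refl R P)).trans
            (α.trans ((e.symm.prodCongr (LinearEquiv.refl R Q)).trans
              (LinearEquiv.prodAssoc R ↥p ↥q Q))))
      obtain ⟨γ⟩ := IH (finrank F ↥p) (by omega) ↥p (↥q × P) (↥q × Q) (le_refl _) β
      obtain ⟨δ⟩ := IH (finrank F ↥q) (by omega) ↥q P Q (le_refl _) γ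
      exact ⟨δ⟩
    · push_neg at hdec
      have hInd : ∀ p q : Submodule R M, IsCompl p q → p = ⊥ ∨ q = ⊥ := by
        intro p q hpq
        by_contra hc
        push_neg at hc
        exact hc.2 (hdec p q hpq hc.1)
      exact exchange_cancel (F := F) hInd α

/-- The left ideal `{x | x * e = x}` (equals `A e` when `e` is idempotent). -/
def rightMulFix (A : Type*) [Ring A] (e : A) : Submodule A A where
  carrier := {x | x * e = x}
  add_mem' := by
    intro a b ha hb
    show (a + b) * e = a + b
    rw [add_mul, ha, hb]
  zero_mem' := zero_mul e
  smul_mem' := by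
    intro c x hx
    show (c * x) * e = c * x
    rw [mul_assoc, hx]

theorem mem_rightMulFix {A : Type*} [Ring A] {e x : A} :
    x ∈ rightMulFix A e ↔ x * e = x := Iff.rfl

theorem isCompl_rightMulFix {A : Type*} [Ring A] {e : A} (he : e * e = e) :
    IsCompl (rightMulFix A e) (rightMulFix A (1 - e)) := by
  constructor
  · rw [disjoint_iff, Submodule.eq_bot_iff]
    intro x hx
    rw [Submodule.mem_inf] at hx
    obtain ⟨h1, h2⟩ := hx
    rw [mem_rightMulFix] at h1 h2
    rw [mul_sub, mul_one, sub_eq_self] at h2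
    rw [← h1, h2]
  · rw [codisjoint_iff, eq_top_iff]
    intro x _
    refine Submodule.mem_sup.mpr ⟨x * e, ?_, x * (1 - e), ?_, by rw [← mul_add]; simp⟩
    · show (x * e) * e = x * e
      rw [mul_assoc, he]
    · show (x * (1 - e)) * (1 - e) = x * (1 - e)
      rw [mul_assoc]
      congr 1
      rw [sub_mul, one_mul, mul_sub, mul_one, he]
      abel
  
/-- Equivalence between corner left-ideals induced by an equivalence of idempotents. -/
def cornerEquiv {A : Type*} [Ring A] {e f a b : A} (hab : a * b = e) (hba : b * a = f)
    (haf : a * f = a) (hbe : b * e = b) :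
    (rightMulFix A e) ≃ₗ[A] (rightMulFix A f) where
  toFun x := ⟨(x : A) * a, by rw [mem_rightMulFix, mul_assoc, haf]⟩
  map_add' x y := Subtype.ext (add_mul _ _ _)
  map_smul' c x := Subtype.ext (mul_assoc c x a)
  invFun y := ⟨(y : A) * b, by rw [mem_rightMulFix, mul_assoc, hbe]⟩
  left_inv x := Subtype.ext (by
    show ((x : A) * a) * b = x
    rw [mul_assoc, hab, x.2])
  right_inv y := Subtype.ext (by
    show ((y : A) * b) * a = y
    rw [mul_assoc, hba, y.2])

theorem exists_complement_witness {F : Type*} [Field F] {A : Type*} [Ring A] [Algebra F A]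
    [FiniteDimensional F A] {i j s s' : A}
    (hi : i * i = i) (hj : j * j = j)
    (hss' : s * s' = i) (hs's : s' * s = j)
    (hsj : s * j = s) (hs'i : s' * i = s') :
    ∃ t t' : A, (1 - i) * t = t ∧ t * (1 - j) = t ∧ (1 - j) * t' = t' ∧ t' * (1 - i) = t' ∧
      t * t' = 1 - i ∧ t' * t = 1 - j := by
  haveI h1 : FiniteDimensional F ↥(rightMulFix A j) :=
    inferInstanceAs (FiniteDimensional F ↥((rightMulFix A j).restrictScalars F))
  set Ei := Submodule.prodEquivOfIsCompl _ _ (isCompl_rightMulFix hi) with hEi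
  set Ej := Submodule.prodEquivOfIsCompl _ _ (isCompl_rightMulFix hj) with hEj
  set c : (rightMulFix A i) ≃ₗ[A] (rightMulFix A j) := cornerEquiv hss' hs's hsj hs'i with hc
  let β : (↥(rightMulFix A j) × ↥(rightMulFix A (1 - i)))
      ≃ₗ[A] (↥(rightMulFix A j) × ↥(rightMulFix A (1 - j))) :=
    ((c.symm.prodCongr (LinearEquiv.refl A _)).trans Ei).trans Ej.symm
  obtain ⟨g⟩ := cancel_of_equiv F (finrank F ↥(rightMulFix A j)) _ _ _ (le_refl _) β
  have hmemi : (1 - i) ∈ rightMulFix A (1 - i) := by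
    rw [mem_rightMulFix, sub_mul, one_mul, mul_sub, mul_one, hi]
    abel
  have hmemj : (1 - j) ∈ rightMulFix A (1 - j) := by
    rw [mem_rightMulFix, sub_mul, one_mul, mul_sub, mul_one, hj]
    abel
  set z₁ : ↥(rightMulFix A (1 - i)) := ⟨1 - i, hmemi⟩ with hz₁
  set z₂ : ↥(rightMulFix A (1 - j)) := ⟨1 - j, hmemj⟩ with hz₂
  set t₀ : A := (g z₁ : A) with ht₀
  set t₀' : A := (g.symm z₂ : A) with ht₀'
  have hgt : ∀ u : ↥(rightMulFix A (1 - i)), (g u : A) = (u : A) * t₀ := by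
    intro u
    have hu : u = (u : A) • z₁ := Subtype.ext (by
      show (u : A) = (u : A) * (1 - i)
      exact u.2.symm)
    calc (g u : A) = (g ((u : A) • z₁) : A) := by rw [← hu]
      _ = (((u : A) • g z₁ : ↥(rightMulFix A (1 - j))) : A) := by rw [map_smul]
      _ = (u : A) * t₀ := rfl
  have hgt' : ∀ v : ↥(rightMulFix A (1 - j)), (g.symm v : A) = (v : A) * t₀' := by
    intro v
    have hv : v = (v : A) • z₂ := Subtype.ext (by
      show (v : A) = (v : A) * (1 - j)
      exact v.2.symm)
    calc (g.symm v : A) = (g.symm ((v : A) • z₂) : A) := by rw [← hv]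
      _ = (((v : A) • g.symm z₂ : ↥(rightMulFix A (1 - i))) : A) := by rw [map_smul]
      _ = (v : A) * t₀' := rfl
  have h₁ : t₀ * t₀' = 1 - i := by
    have h := hgt' (g z₁)
    rw [g.symm_apply_apply] at h
    exact h.symm
  have h₂ : t₀' * t₀ = 1 - j := by
    have h := hgt (g.symm z₂)
    rw [g.apply_symm_apply] at h
    exact h.symm
  have ht₀m : t₀ * (1 - j) = t₀ := (g z₁).2
  have ht₀'m : t₀' * (1 - i) = t₀' := (g.symm z₂).2
  have e2i : (1 - i) * (1 - i) = 1 - i := by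
    rw [sub_mul, one_mul, mul_sub, mul_one, hi]; abel
  have e2j : (1 - j) * (1 - j) = 1 - j := by
    rw [sub_mul, one_mul, mul_sub, mul_one, hj]; abel
  refine ⟨(1 - i) * t₀, (1 - j) * t₀', ?_, ?_, ?_, ?_, ?_, ?_⟩
  · rw [← mul_assoc, e2i]
  · rw [mul_assoc, ht₀m]
  · rw [← mul_assoc, e2j]
  · rw [mul_assoc, ht₀'m]
  · have e0 : ((1 - i) * t₀) * ((1 - j) * t₀') = (1 - i) * ((t₀ * (1 - j)) * t₀') := by
      noncomm_ring
    rw [e0, ht₀m, h₁, e2i]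
  · have e0 : ((1 - j) * t₀') * ((1 - i) * t₀) = (1 - j) * ((t₀' * (1 - i)) * t₀) := by
      noncomm_ring
    rw [e0, ht₀'m, h₂, e2j]

end CancellationMachinery


def IsWitness {G : Type*} [Group G] {A : Type*} [Ring A] (σ : G →* Aˣ)
    {U V : Subgroup G} (φ : V ≃* U) (i j s s' : A) : Prop :=
  (∀ v : V, (σ ((φ v : U) : G) : A) * s = s * (σ (v : G) : A)) ∧
    i * s = s ∧ s * j = s ∧
  (∀ u : U, (σ ((φ.symm u : V) : G) : A) * s' = s' * (σ (u : G) : A)) ∧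
    j * s' = s' ∧ s' * i = s' ∧
  s * s' = i ∧ s' * s = j

/-- Lemma 4.1: for idempotents `i ∈ A^U`, `j ∈ A^V` and a group isomorphism `φ : V → U`,
the following are equivalent: (a) there is a unit `r ∈ Aˣ` with
`σ(φ(v)) i = r (σ(v) j) r⁻¹` for all `v ∈ V`; (b) there is a `φ`-witness `j ↦ i`. -/
theorem stmt6 (F : Type*) [Field F] (A : Type*) [Ring A] [Algebra F A]
    [FiniteDimensional F A] (G : Type*) [Group G] [Finite G] (σ : G →* Aˣ)
    (U V : Subgroup G) (φ : V ≃* U) (i j : A)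
    (hi : i * i = i) (hiU : ∀ u : U, (σ (u : G) : A) * i = i * (σ (u : G) : A))
    (hj : j * j = j) (hjV : ∀ v : V, (σ (v : G) : A) * j = j * (σ (v : G) : A)) :
    (∃ r : Aˣ, ∀ v : V,
        (σ ((φ v : U) : G) : A) * i = (r : A) * ((σ (v : G) : A) * j) * ((r⁻¹ : Aˣ) : A)) ↔
      (∃ s s' : A, IsWitness σ φ i j s s') := by
  constructor
  · rintro ⟨r, hr⟩
    have base : i = (r : A) * j * ((r⁻¹ : Aˣ) : A) := by
      have h := hr 1
      simpa using h
    have hir : i * (r : A) = (r : A) * j := by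
      rw [base]
      simp [mul_assoc]
    have hri : ((r⁻¹ : Aˣ) : A) * i = j * ((r⁻¹ : Aˣ) : A) := by
      rw [base]
      simp [mul_assoc]
    refine ⟨(r : A) * j, j * ((r⁻¹ : Aˣ) : A), ?_, ?_, ?_, ?_, ?_, ?_, ?_, ?_⟩
    · intro v
      calc (σ ((φ v : U) : G) : A) * ((r : A) * j)
          = (σ ((φ v : U) : G) : A) * (i * (r : A)) := by rw [hir]
        _ = ((σ ((φ v : U) : G) : A) * i) * (r : A) := by rw [mul_assoc]
        _ = ((r : A) * ((σ (v : G) : A) * j) * ((r⁻¹ : Aˣ) : A)) * (r : A) := by rw [hr v]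
        _ = (r : A) * ((σ (v : G) : A) * j) := by simp
        _ = (r : A) * (j * (σ (v : G) : A)) := by rw [hjV v]
        _ = ((r : A) * j) * (σ (v : G) : A) := by rw [mul_assoc]
    · rw [← mul_assoc, hir, mul_assoc, hj]
    · rw [mul_assoc, hj]
    · intro u
      have h := hr (φ.symm u)
      rw [φ.apply_symm_apply] at h
      have h2 : (σ ((φ.symm u : V) : G) : A) * j * ((r⁻¹ : Aˣ) : A)
          = ((r⁻¹ : Aˣ) : A) * ((σ (u : G) : A) * i) := by
        rw [h]
        simp [mul_assoc]
      calc (σ ((φ.symm u : V) : G) : A) * (j * ((r⁻¹ : Aˣ) : A))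
          = (σ ((φ.symm u : V) : G) : A) * j * ((r⁻¹ : Aˣ) : A) := by rw [mul_assoc]
        _ = ((r⁻¹ : Aˣ) : A) * ((σ (u : G) : A) * i) := h2
        _ = ((r⁻¹ : Aˣ) : A) * (i * (σ (u : G) : A)) := by rw [hiU u]
        _ = (((r⁻¹ : Aˣ) : A) * i) * (σ (u : G) : A) := by rw [← mul_assoc]
        _ = (j * ((r⁻¹ : Aˣ) : A)) * (σ (u : G) : A) := by rw [hri]
    · rw [← mul_assoc, hj]
    · rw [mul_assoc, hri, ← mul_assoc, hj]
    · rw [mul_assoc, ← mul_assoc j, hj, ← mul_assoc]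
      exact base.symm
    · rw [mul_assoc, Units.inv_mul_cancel_left, hj]
  · rintro ⟨s, s', hsφ, his, hsj, hs'φ, hjs', hs'i, hss', hs's⟩
    obtain ⟨t, t', h1t, h2t, h1t', h2t', htt', ht't⟩ :=
      exists_complement_witness (F := F) hi hj hss' hs's hsj hs'i
    have htj : t * j = 0 := by
      have h := h2t
      rw [mul_sub, mul_one, sub_eq_self] at h
      exact h
    have ht'i : t' * i = 0 := by
      have h := h2t'
      rw [mul_sub, mul_one, sub_eq_self] at h
      exact h
    have hst' : s * t' = 0 := by
      rw [← h1t', ← mul_assoc]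
      have h : s * (1 - j) = 0 := by rw [mul_sub, mul_one, hsj, sub_self]
      rw [h, zero_mul]
    have hts' : t * s' = 0 := by
      rw [← hjs', ← mul_assoc, htj, zero_mul]
    have hs't : s' * t = 0 := by
      rw [← h1t, ← mul_assoc]
      have h : s' * (1 - i) = 0 := by rw [mul_sub, mul_one, hs'i, sub_self]
      rw [h, zero_mul]
    have ht's : t' * s = 0 := by
      rw [← his, ← mul_assoc, ht'i, zero_mul]
    have hrr' : (s + t) * (s' + t') = 1 := by
      rw [mul_add, add_mul, add_mul, hss', hst', hts', htt']
      abel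
    have hr'r : (s' + t') * (s + t) = 1 := by
      rw [mul_add, add_mul, add_mul, hs's, hs't, ht's, ht't]
      abel
    refine ⟨⟨s + t, s' + t', hrr', hr'r⟩, ?_⟩
    intro v
    show (σ ((φ v : U) : G) : A) * i = (s + t) * ((σ (v : G) : A) * j) * (s' + t')
    have e1 : (s + t) * j = s := by
      rw [add_mul, hsj, htj, add_zero]
    calc (σ ((φ v : U) : G) : A) * i
        = (σ ((φ v : U) : G) : A) * (s * s') := by rw [hss']
      _ = ((σ ((φ v : U) : G) : A) * s) * s' := by rw [mul_assoc]
      _ = (s * (σ (v : G) : A)) * s' := by rw [hsφ v]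
      _ = (s * (σ (v : G) : A)) * s' + (σ ((φ v : U) : G) : A) * (s * t') := by
          rw [hst', mul_zero, add_zero]
      _ = (s * (σ (v : G) : A)) * s' + ((σ ((φ v : U) : G) : A) * s) * t' := by
          rw [mul_assoc ((σ ((φ v : U) : G) : A)) s t']
      _ = (s * (σ (v : G) : A)) * s' + (s * (σ (v : G) : A)) * t' := by rw [hsφ v]
      _ = (s * (σ (v : G) : A)) * (s' + t') := by rw [mul_add]
      _ = (((s + t) * j) * (σ (v : G) : A)) * (s' + t') := by rw [e1]
      _ = ((s + t) * (j * (σ (v : G) : A))) * (s' + t') := by rw [mul_assoc (s + t) j]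
      _ = (s + t) * ((σ (v : G) : A) * j) * (s' + t') := by rw [hjV v]
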